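/- In the special case d = 1, L = 2: let σ be the logistic squasher, δ > 0, a < b with b − a ≥ 2δ, and n ∈ ℕ. Then there exist weights such that the two-layer network f(x) = σ(c₁·σ(α₁ x + β₁) + c₂·σ(α₂ x + β₂) + c₀) satisfies f(x) ≥ 1 − e^{−n} for all x ∈ [a+δ, b−δ] ∩ [−1,1] and f(x) ≤ e^{−n} for all x ∈ [−1,1] \ [a−δ, b+δ]. One may take α₁ = −(2/δ)log 7, β₁ = −a·α₁, α₂ = (2/δ)log 7, β₂ = −b·α₂, c₁ = c₂ = −4(n+1), c₀ = 4(n+1). -/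

import Mathlib

/-- The logistic squasher. -/
noncomputable def logistic (x : ℝ) : ℝ := 1 / (1 + Real.exp (-x))

lemma logistic_nonneg (t : ℝ) : 0 ≤ logistic t := by
  unfold logistic
  positivity

lemma logistic_le_one (t : ℝ) : logistic t ≤ 1 := by
  unfold logistic
  rw [div_le_one (by positivity)]
  nlinarith [Real.exp_pos (-t)]

lemma logistic_le_exp (t : ℝ) : logistic t ≤ Real.exp t := by
  unfold logistic
  rw [div_le_iff₀ (by positivity)]
  have h : Real.exp t * Real.exp (-t) = 1 := by rw [← Real.exp_add]; simp
  nlinarith [Real.exp_pos t]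

lemma one_sub_exp_le_logistic (t : ℝ) : 1 - Real.exp (-t) ≤ logistic t := by
  unfold logistic
  rw [le_div_iff₀ (by positivity)]
  nlinarith [Real.exp_pos (-t), sq_nonneg (Real.exp (-t))]

/-- Special case `d = 1`, `L = 2` of Lemma 7: a two-layer logistic network
approximating the indicator of an interval `[a,b]` with error `e⁻ⁿ` outside a
`δ`-neighbourhood of its endpoints. -/
theorem stmt_15 (δ : ℝ) (hδ : 0 < δ) (a b : ℝ) (hab : a < b) (h2δ : 2 * δ ≤ b - a)
    (n : ℕ) :
    ∃ α₁ β₁ α₂ β₂ c₀ c₁ c₂ : ℝ,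
      ∀ x ∈ Set.Icc (-1 : ℝ) 1,
        (x ∈ Set.Icc (a + δ) (b - δ) →
          1 - Real.exp (-(n : ℝ)) ≤
            logistic (c₁ * logistic (α₁ * x + β₁) + c₂ * logistic (α₂ * x + β₂) + c₀)) ∧
        (x ∉ Set.Icc (a - δ) (b + δ) →
          logistic (c₁ * logistic (α₁ * x + β₁) + c₂ * logistic (α₂ * x + β₂) + c₀)
            ≤ Real.exp (-(n : ℝ))) := by
  set M : ℝ := 2 * Real.log 7 / δ with hM
  have hlog7 : 0 < Real.log 7 := Real.log_pos (by norm_num)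
  have hMpos : 0 < M := by positivity
  have hMδ : M * δ = 2 * Real.log 7 := by rw [hM]; field_simp [hδ.ne']
  set K : ℝ := 4 * ((n : ℝ) + 1) with hK
  have hKpos : 0 < K := by positivity
  have hexp49 : Real.exp (-(2 * Real.log 7)) = 1 / 49 := by
    rw [show (2 : ℝ) * Real.log 7 = Real.log 49 by
      rw [show (49 : ℝ) = 7 ^ (2 : ℕ) by norm_num, Real.log_pow]; push_cast; ring,
      Real.exp_neg, Real.exp_log (by norm_num)]
    norm_num
  refine ⟨M, -a * M, -M, b * M, -(3/2) * K, K, K, fun x _ => ⟨?_, ?_⟩⟩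
  · rintro ⟨hx1, hx2⟩
    set σ₁ := logistic (M * x + -a * M) with hσ₁
    set σ₂ := logistic (-M * x + b * M) with hσ₂
    have h1 : 1 - 1/49 ≤ σ₁ := by
      calc (1 : ℝ) - 1/49 = 1 - Real.exp (-(2 * Real.log 7)) := by rw [hexp49]
        _ ≤ 1 - Real.exp (-(M * x + -a * M)) := by
            gcongr
            have : 2 * Real.log 7 = M * δ := hMδ.symm
            nlinarith
        _ ≤ σ₁ := one_sub_exp_le_logistic _
    have h2 : 1 - 1/49 ≤ σ₂ := by
      calc (1 : ℝ) - 1/49 = 1 - Real.exp (-(2 * Real.log 7)) := by rw [hexp49]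
        _ ≤ 1 - Real.exp (-(-M * x + b * M)) := by
            gcongr
            have : 2 * Real.log 7 = M * δ := hMδ.symm
            nlinarith
        _ ≤ σ₂ := one_sub_exp_le_logistic _
    have hinner : (n : ℝ) ≤ K * σ₁ + K * σ₂ + -(3/2) * K := by
      have hσ₁le := logistic_le_one (M * x + -a * M)
      have hσ₂le := logistic_le_one (-M * x + b * M)
      have hn : (0 : ℝ) ≤ (n : ℝ) := Nat.cast_nonneg n
      nlinarith
    calc 1 - Real.exp (-(n : ℝ))
        ≤ 1 - Real.exp (-(K * σ₁ + K * σ₂ + -(3/2) * K)) := by gcongr <;> linarith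
      _ ≤ _ := one_sub_exp_le_logistic _
  · intro hx
    set σ₁ := logistic (M * x + -a * M) with hσ₁
    set σ₂ := logistic (-M * x + b * M) with hσ₂
    have hσ₁le := logistic_le_one (M * x + -a * M)
    have hσ₂le := logistic_le_one (-M * x + b * M)
    have hσ₁nn := logistic_nonneg (M * x + -a * M)
    have hσ₂nn := logistic_nonneg (-M * x + b * M)
    have hn : (0 : ℝ) ≤ (n : ℝ) := Nat.cast_nonneg n
    have hcases : x < a - δ ∨ b + δ < x := by
      by_contra h
      push_neg at h
      exact hx ⟨h.1, h.2⟩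
    have hinner : K * σ₁ + K * σ₂ + -(3/2) * K ≤ -(n : ℝ) := by
      rcases hcases with h | h
      · have hsmall : σ₁ ≤ 1/49 := by
          calc σ₁ ≤ Real.exp (M * x + -a * M) := logistic_le_exp _
            _ ≤ Real.exp (-(2 * Real.log 7)) := by
                gcongr
                have : 2 * Real.log 7 = M * δ := hMδ.symm
                nlinarith
            _ = 1/49 := hexp49
        nlinarith
      · have hsmall : σ₂ ≤ 1/49 := by
          calc σ₂ ≤ Real.exp (-M * x + b * M) := logistic_le_exp _
            _ ≤ Real.exp (-(2 * Real.log 7)) := by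
                gcongr
                have : 2 * Real.log 7 = M * δ := hMδ.symm
                nlinarith
            _ = 1/49 := hexp49
        nlinarith
    calc logistic (K * σ₁ + K * σ₂ + -(3/2) * K)
        ≤ Real.exp (K * σ₁ + K * σ₂ + -(3/2) * K) := logistic_le_exp _
      _ ≤ Real.exp (-(n : ℝ)) := by gcongr
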